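/- Let (X,d) be a quasi cone metric space in which every forward convergent sequence is also backward convergent (to the same limit). Then the forward topology T_f on X is Hausdorff. -/

import Mathlib

open TopologicalSpace

/-- A quasi cone metric space on `X` with values in a real Banach space `E`,
ordered by a cone `P` with nonempty interior. -/
structure QCMS (X : Type*) (E : Type*) [NormedAddCommGroup E] [NormedSpace ℝ E] : Type _ where
  P : Set E
  P_closed : IsClosed P
  P_ne : P ≠ {0}
  P_nonempty : P.Nonempty
  P_smul_add : ∀ ⦃x⦄, x ∈ P → ∀ ⦃y⦄, y ∈ P → ∀ s t : ℝ, 0 ≤ s → 0 ≤ t → s • x + t • y ∈ P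
  P_eq_zero : ∀ x, x ∈ P → -x ∈ P → x = 0
  P_int : (interior P).Nonempty
  d : X → X → E
  d_mem : ∀ x y, d x y ∈ P
  d_eq_zero_iff : ∀ x y, d x y = 0 ↔ x = y
  triangle : ∀ x y z, d x z + d z y - d x y ∈ P

namespace QCMS

variable {X E : Type*} [NormedAddCommGroup E] [NormedSpace ℝ E]

/-- `a ≪ b` : `b - a` lies in the interior of the cone. -/
def lt' (Q : QCMS X E) (a b : E) : Prop := b - a ∈ interior Q.P

/-- Forward open ball. -/
def ballF (Q : QCMS X E) (x : X) (u : E) : Set X := {y | Q.lt' (Q.d x y) u}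

/-- Backward open ball. -/
def ballB (Q : QCMS X E) (x : X) (u : E) : Set X := {y | Q.lt' (Q.d y x) u}

/-- The forward topology, generated by forward open balls. -/
def Tf (Q : QCMS X E) : TopologicalSpace X :=
  generateFrom {s | ∃ x u, u ∈ interior Q.P ∧ s = Q.ballF x u}

/-- The backward topology, generated by backward open balls. -/
def Tb (Q : QCMS X E) : TopologicalSpace X :=
  generateFrom {s | ∃ x u, u ∈ interior Q.P ∧ s = Q.ballB x u}

/-- Forward convergence of a sequence. -/
def FConv (Q : QCMS X E) (x : ℕ → X) (a : X) : Prop :=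
  ∀ u ∈ interior Q.P, ∃ N, ∀ n ≥ N, Q.lt' (Q.d a (x n)) u

/-- Backward convergence of a sequence. -/
def BConv (Q : QCMS X E) (x : ℕ → X) (a : X) : Prop :=
  ∀ u ∈ interior Q.P, ∃ N, ∀ n ≥ N, Q.lt' (Q.d (x n) a) u

/-- Forward Cauchy sequence. -/
def FCauchy (Q : QCMS X E) (x : ℕ → X) : Prop :=
  ∀ u ∈ interior Q.P, ∃ N, ∀ m n, N ≤ m → m ≤ n → Q.lt' (Q.d (x m) (x n)) u

/-- Forward sequential compactness of the whole space. -/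
def FSeqCompact (Q : QCMS X E) : Prop :=
  ∀ x : ℕ → X, ∃ (a : X) (φ : ℕ → ℕ), StrictMono φ ∧ Q.FConv (x ∘ φ) a

/-- Forward total boundedness of the whole space. -/
def FTotallyBounded (Q : QCMS X E) : Prop :=
  ∀ u ∈ interior Q.P, ∃ t : Finset X, ∀ y : X, ∃ c ∈ t, y ∈ Q.ballF c u

/-- Forward completeness. -/
def FComplete (Q : QCMS X E) : Prop :=
  ∀ x : ℕ → X, Q.FCauchy x → ∃ a, Q.FConv x a

end QCMS

section Aux

variable {X E : Type*} [NormedAddCommGroup E] [NormedSpace ℝ E] (Q : QCMS X E)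

lemma QCMS.add_mem_P {a b : E} (ha : a ∈ Q.P) (hb : b ∈ Q.P) : a + b ∈ Q.P := by
  simpa using Q.P_smul_add ha hb 1 1 zero_le_one zero_le_one

lemma QCMS.int_add_mem {a b : E} (ha : a ∈ interior Q.P) (hb : b ∈ Q.P) :
    a + b ∈ interior Q.P := by
  have hsub : (fun z => z + b) '' interior Q.P ⊆ Q.P := by
    rintro _ ⟨z, hz, rfl⟩
    exact Q.add_mem_P (interior_subset hz) hb
  have hopen : IsOpen ((fun z => z + b) '' interior Q.P) :=
    (isOpenMap_add_right b) _ isOpen_interior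
  exact interior_maximal hsub hopen ⟨a, ha, rfl⟩

lemma QCMS.smul_mem_P {a : E} {t : ℝ} (ht : 0 ≤ t) (ha : a ∈ Q.P) : t • a ∈ Q.P := by
  simpa using Q.P_smul_add ha ha t 0 ht le_rfl

/-- key lemma: if every pair of forward balls of the same radius about `x` and `y`
intersect, and forward convergence implies backward convergence, then `x = y`. -/
lemma QCMS.key (h : ∀ (z : ℕ → X) (a : X), Q.FConv z a → Q.BConv z a)
    (x y : X)
    (hcon : ∀ u ∈ interior Q.P, (Q.ballF x u ∩ Q.ballF y u).Nonempty) :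
    x = y := by
  obtain ⟨e, he⟩ := Q.P_int
  set un : ℕ → E := fun n => (1 / (n + 1 : ℝ)) • e with hun
  have hun_mem : ∀ n, un n ∈ interior Q.P := by
    intro n
    have hpos : (0 : ℝ) < 1 / (n + 1 : ℝ) := by positivity
    have hsub : ((1 / (n + 1 : ℝ)) • ·) '' interior Q.P ⊆ Q.P := by
      rintro _ ⟨z, hz, rfl⟩
      exact Q.smul_mem_P hpos.le (interior_subset hz)
    have hopen : IsOpen (((1 / (n + 1 : ℝ)) • ·) '' interior Q.P) :=
      (isOpenMap_smul₀ (G₀ := ℝ) hpos.ne') _ isOpen_interior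
    exact interior_maximal hsub hopen ⟨e, he, rfl⟩
  have hun_tendsto : Filter.Tendsto un Filter.atTop (nhds 0) := by
    have := (tendsto_one_div_add_atTop_nhds_zero_nat :
      Filter.Tendsto (fun n : ℕ => 1 / ((n : ℝ) + 1)) Filter.atTop (nhds 0)).smul_const e
    simpa [hun, one_div] using this
  choose z hz using fun n => hcon (un n) (hun_mem n)
  -- forward convergence of z to any point a with d(a, z n) ≪ un n
  have fconv : ∀ a : X, (∀ n, z n ∈ Q.ballF a (un n)) → Q.FConv z a := by
    intro a hball v hv
    obtain ⟨ε, hε, hεsub⟩ := Metric.isOpen_iff.mp isOpen_interior v hv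
    obtain ⟨N, hN⟩ := (Metric.tendsto_atTop.mp hun_tendsto ε hε)
    refine ⟨N, fun n hn => ?_⟩
    have h1 : un n - Q.d a (z n) ∈ interior Q.P := hball n
    have h2 : v - un n ∈ Q.P := by
      have : dist (v - un n) v < ε := by
        simpa [dist_eq_norm] using (by simpa [dist_eq_norm] using hN n hn :
          ‖un n‖ < ε)
      exact interior_subset (hεsub this)
    have : (un n - Q.d a (z n)) + (v - un n) ∈ interior Q.P := Q.int_add_mem h1 h2
    simpa [QCMS.lt', sub_add_sub_cancel'] using this
  have hx : Q.FConv z x := fconv x fun n => (hz n).1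
  have hy : Q.FConv z y := fconv y fun n => (hz n).2
  have hby : Q.BConv z y := h z y hy
  -- for every u in interior P, u - d x y ∈ P
  have hkey : ∀ u ∈ interior Q.P, u - Q.d x y ∈ Q.P := by
    intro u hu
    have hhalf : (1 / 2 : ℝ) • u ∈ interior Q.P := by
      have hsub : ((1 / 2 : ℝ) • ·) '' interior Q.P ⊆ Q.P := by
        rintro _ ⟨w, hw, rfl⟩
        exact Q.smul_mem_P (by norm_num) (interior_subset hw)
      have hopen : IsOpen (((1 / 2 : ℝ) • ·) '' interior Q.P) :=
        (isOpenMap_smul₀ (G₀ := ℝ) (by norm_num)) _ isOpen_interior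
      exact interior_maximal hsub hopen ⟨u, hu, rfl⟩
    obtain ⟨N₁, hN₁⟩ := hx _ hhalf
    obtain ⟨N₂, hN₂⟩ := hby _ hhalf
    set n := max N₁ N₂
    have h1 : (1 / 2 : ℝ) • u - Q.d x (z n) ∈ interior Q.P :=
      hN₁ n (le_max_left _ _)
    have h2 : (1 / 2 : ℝ) • u - Q.d (z n) y ∈ interior Q.P :=
      hN₂ n (le_max_right _ _)
    have h3 : Q.d x (z n) + Q.d (z n) y - Q.d x y ∈ Q.P := Q.triangle x y (z n)
    have hsum : ((1 / 2 : ℝ) • u - Q.d x (z n)) + ((1 / 2 : ℝ) • u - Q.d (z n) y)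
        + (Q.d x (z n) + Q.d (z n) y - Q.d x y) ∈ Q.P :=
      Q.add_mem_P (Q.add_mem_P (interior_subset h1) (interior_subset h2)) h3
    have hh : (1 / 2 : ℝ) • u + (1 / 2 : ℝ) • u = u := by
      rw [← add_smul]; norm_num
    have heq : ((1 / 2 : ℝ) • u - Q.d x (z n)) + ((1 / 2 : ℝ) • u - Q.d (z n) y)
        + (Q.d x (z n) + Q.d (z n) y - Q.d x y)
        = ((1 / 2 : ℝ) • u + (1 / 2 : ℝ) • u) - Q.d x y := by abel
    rw [heq, hh] at hsum
    exact hsum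
  -- take limits along un to conclude d x y = 0
  have hlim : Filter.Tendsto (fun n => un n - Q.d x y) Filter.atTop
      (nhds (0 - Q.d x y)) := hun_tendsto.sub tendsto_const_nhds
  have hneg : -Q.d x y ∈ Q.P := by
    have := Q.P_closed.mem_of_tendsto hlim
      (Filter.Eventually.of_forall fun n => hkey _ (hun_mem n))
    simpa using this
  have : Q.d x y = 0 := Q.P_eq_zero _ (Q.d_mem x y) hneg
  exact (Q.d_eq_zero_iff x y).mp this

end Aux

/-- if forward convergence implies backward convergence,
the forward topology is Hausdorff. -/
theorem forward_topology_t2 {X E : Type*} [NormedAddCommGroup E] [NormedSpace ℝ E]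
    (Q : QCMS X E) (h : ∀ (x : ℕ → X) (a : X), Q.FConv x a → Q.BConv x a) :
    @T2Space X Q.Tf := by
  letI := Q.Tf
  constructor
  intro x y hxy
  by_contra hcon
  push_neg at hcon
  apply hxy
  apply Q.key h x y
  intro u hu
  by_contra hempty
  rw [Set.not_nonempty_iff_eq_empty] at hempty
  have hopenF : ∀ (a : X) (v : E), v ∈ interior Q.P → IsOpen (Q.ballF a v) := by
    intro a v hv
    show Q.Tf.IsOpen _
    exact TopologicalSpace.isOpen_generateFrom_of_mem ⟨a, v, hv, rfl⟩
  have hmem : ∀ a : X, a ∈ Q.ballF a u := by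
    intro a
    show Q.lt' (Q.d a a) u
    unfold QCMS.lt'
    rw [(Q.d_eq_zero_iff a a).mpr rfl]
    simpa using hu
  exact hcon (Q.ballF x u) (Q.ballF y u) (hopenF x u hu) (hopenF y u hu)
    (hmem x) (hmem y) (Set.disjoint_iff_inter_eq_empty.mpr hempty)
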